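/- The map p₁ ↦ β given by β = (2-ρ)(1-p₁)/(1-ρ(1-p₁)) for p₁ ∈ [1/2, 1] and β = (1-ρp₁)/((2-ρ)p₁) for p₁ ∈ (0, 1/2) is a strictly decreasing bijection from (0,1] onto [0,∞) under 0 < ρ < 1, with p₁ = 1 ↦ β = 0 and p₁ = 1/2 ↦ β = 1. -/

import Mathlib

theorem p1_to_beta_strictly_decreasing_bijection
    (ρ : ℝ) (hρ0 : 0 < ρ) (hρ1 : ρ < 1) :
    let f : ℝ → ℝ := fun p₁ =>
      if 1 / 2 ≤ p₁ then (2 - ρ) * (1 - p₁) / (1 - ρ * (1 - p₁))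
      else (1 - ρ * p₁) / ((2 - ρ) * p₁)
    StrictAntiOn f (Set.Ioc (0 : ℝ) 1) ∧
    Set.BijOn f (Set.Ioc (0 : ℝ) 1) (Set.Ici (0 : ℝ)) ∧
    f 1 = 0 ∧ f (1 / 2) = 1 := by
  intro f
  have h2ρ : (0:ℝ) < 2 - ρ := by linarith
  have hden1 : ∀ p : ℝ, 0 < p → 0 < 1 - ρ * (1 - p) := by
    intro p hp; nlinarith
  have hanti : StrictAntiOn f (Set.Ioc (0:ℝ) 1) := by
    intro a ha b hb hab
    simp only [f]
    rcases le_or_gt (1/2 : ℝ) a with haa | haa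
    · have hba : (1:ℝ)/2 ≤ b := le_of_lt (lt_of_le_of_lt haa hab)
      rw [if_pos haa, if_pos hba,
        div_lt_div_iff₀ (hden1 b hb.1) (hden1 a ha.1)]
      nlinarith [mul_pos h2ρ (sub_pos.mpr hab)]
    · rcases le_or_gt (1/2 : ℝ) b with hbb | hbb
      · -- a in second branch (f a > 1), b in first branch (f b ≤ 1)
        rw [if_pos hbb, if_neg (not_le.mpr haa)]
        have h1 : (2 - ρ) * (1 - b) / (1 - ρ * (1 - b)) ≤ 1 := by
          rw [div_le_one (hden1 b hb.1)]; nlinarith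
        have h2 : (1:ℝ) < (1 - ρ * a) / ((2 - ρ) * a) := by
          rw [lt_div_iff₀ (mul_pos h2ρ ha.1)]; nlinarith
        linarith
      · rw [if_neg (not_le.mpr haa), if_neg (not_le.mpr hbb)]
        rw [div_lt_div_iff₀ (mul_pos h2ρ hb.1) (mul_pos h2ρ ha.1)]
        nlinarith [mul_pos h2ρ (sub_pos.mpr hab)]
  refine ⟨hanti, ⟨?_, hanti.injOn, ?_⟩, ?_, ?_⟩
  · -- MapsTo
    intro p hp
    simp only [f, Set.mem_Ici]
    rcases le_or_gt (1/2 : ℝ) p with h | h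
    · rw [if_pos h]
      exact div_nonneg (mul_nonneg (le_of_lt h2ρ) (by linarith [hp.2])) (le_of_lt (hden1 p hp.1))
    · rw [if_neg (not_le.mpr h)]
      exact div_nonneg (by nlinarith) (mul_pos h2ρ hp.1).le
  · -- SurjOn
    intro β hβ
    simp only [Set.mem_Ici] at hβ
    rcases le_or_gt β 1 with hβ1 | hβ1
    · have hD : (0:ℝ) < 2 - ρ + β * ρ := by nlinarith
      refine ⟨1 - β / (2 - ρ + β * ρ), ⟨?_, ?_⟩, ?_⟩
      · have : β / (2 - ρ + β * ρ) < 1 := by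
          rw [div_lt_one hD]; nlinarith
        linarith
      · have : 0 ≤ β / (2 - ρ + β * ρ) := div_nonneg hβ hD.le
        linarith
      · have hhalf : (1:ℝ)/2 ≤ 1 - β / (2 - ρ + β * ρ) := by
          have : β / (2 - ρ + β * ρ) ≤ 1/2 := by
            rw [div_le_iff₀ hD]; nlinarith
          linarith
        simp only [f]
        rw [if_pos hhalf]
        rw [div_eq_iff]
        · field_simp
          ring
        · have : 1 - (1 - β / (2 - ρ + β * ρ)) = β / (2 - ρ + β * ρ) := by ring
          rw [this]
          have hb2 : β / (2 - ρ + β * ρ) ≤ 1/2 := by linarith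
          have := mul_le_mul_of_nonneg_left hb2 hρ0.le
          linarith
    · have hD : (0:ℝ) < β * (2 - ρ) + ρ := by nlinarith
      have hD2 : (2:ℝ) < β * (2 - ρ) + ρ := by nlinarith
      refine ⟨1 / (β * (2 - ρ) + ρ), ⟨?_, ?_⟩, ?_⟩
      · positivity
      · rw [div_le_one hD]; linarith
      · have hlt : 1 / (β * (2 - ρ) + ρ) < 1/2 := by
          rw [div_lt_div_iff₀ hD (by norm_num : (0:ℝ) < 2)]; linarith
        simp only [f]
        rw [if_neg (not_le.mpr hlt)]
        rw [div_eq_iff (by positivity)]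
        field_simp
        ring
  · -- f 1 = 0
    simp only [f]
    rw [if_pos (by norm_num : (1:ℝ)/2 ≤ 1)]
    norm_num
  · -- f (1/2) = 1
    simp only [f]
    rw [if_pos le_rfl]
    rw [div_eq_one_iff_eq (by nlinarith)]
    ring
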